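/- Let w = (w_0,…,w_n) be coprime positive integers with w_n = 1, and let f ∈ ℤ[X_0,…,X_n] be weighted homogeneous of degree d with weights w (i.e. f(X_0^{w_0},…,X_n^{w_n}) is homogeneous of degree d). Then there exist integers a_0,…,a_{n-1} ∈ {0,…,d} such that |f(a_0,…,a_{n-1},1)| ≥ ‖f‖ / 3^{nd}, where ‖f‖ is the maximum of the absolute values of the coefficients of f. -/

import Mathlib

open Polynomial Finset

private lemma coeff_X_sub_C_mul_bound (P : Polynomial ℚ) (B c : ℚ) (hB0 : 0 ≤ B)
    (hB : ∀ i, |P.coeff i| ≤ B) (hc : 0 ≤ c) (i : ℕ) :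
    |((X - C c) * P).coeff i| ≤ (1 + c) * B := by
  rw [sub_mul, Polynomial.coeff_sub, Polynomial.coeff_C_mul]
  have h1 : |(X * P).coeff i| ≤ B := by
    cases i with
    | zero => simpa [Polynomial.mul_coeff_zero] using hB0
    | succ i => rw [Polynomial.coeff_X_mul]; exact hB i
  have h2 : |c * P.coeff i| ≤ c * B := by
    rw [abs_mul, abs_of_nonneg hc]
    exact mul_le_mul_of_nonneg_left (hB i) hc
  have h3 := abs_sub ((X * P).coeff i) (c * P.coeff i)
  nlinarith [h1, h2, h3]

private lemma coeff_prod_basisDivisor (x : ℚ) :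
    ∀ t : Finset ℕ, (∀ j ∈ t, x ≠ (j : ℚ)) →
      ∀ i, |(∏ j ∈ t, Lagrange.basisDivisor x (j : ℚ)).coeff i|
        ≤ ∏ j ∈ t, (1 + (j : ℚ)) / |x - (j : ℚ)| := by
  intro t
  induction t using Finset.induction_on with
  | empty =>
    intro _ i
    simp only [Finset.prod_empty, Polynomial.coeff_one]
    split <;> norm_num
  | @insert a s ha ih =>
    intro hx i
    rw [Finset.prod_insert ha, Finset.prod_insert ha]
    have hxa : x ≠ (a : ℚ) := hx a (Finset.mem_insert_self a s)
    have hB := ih fun j hj => hx j (Finset.mem_insert_of_mem hj)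
    have hB0 : 0 ≤ ∏ j ∈ s, (1 + (j : ℚ)) / |x - (j : ℚ)| :=
      Finset.prod_nonneg fun j _ => div_nonneg (by positivity) (abs_nonneg _)
    have key := coeff_X_sub_C_mul_bound (∏ j ∈ s, Lagrange.basisDivisor x (j : ℚ))
      (∏ j ∈ s, (1 + (j : ℚ)) / |x - (j : ℚ)|) (a : ℚ) hB0 hB (by positivity) i
    rw [Lagrange.basisDivisor, mul_assoc, Polynomial.coeff_C_mul, abs_mul, abs_inv]
    have step : |x - (a:ℚ)|⁻¹ *
          |((X - C (a:ℚ)) * ∏ j ∈ s, Lagrange.basisDivisor x (j : ℚ)).coeff i|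
        ≤ |x - (a:ℚ)|⁻¹ * ((1 + (a:ℚ)) * ∏ j ∈ s, (1 + (j : ℚ)) / |x - (j : ℚ)|) :=
      mul_le_mul_of_nonneg_left key (inv_nonneg.mpr (abs_nonneg _))
    have heq : (1 + (a:ℚ)) / |x - (a:ℚ)| * ∏ j ∈ s, (1 + (j : ℚ)) / |x - (j : ℚ)|
        = |x - (a:ℚ)|⁻¹ * ((1 + (a:ℚ)) * ∏ j ∈ s, (1 + (j : ℚ)) / |x - (j : ℚ)|) := by
      ring
    rw [heq]
    exact step

private lemma prod_bound_eq_choose (d k : ℕ) (hk : k ≤ d) :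
    ∏ j ∈ (Finset.range (d + 1)).erase k, (1 + (j : ℚ)) / |(k : ℚ) - (j : ℚ)|
      = ((d + 1).choose (k + 1) : ℚ) := by
  have hmem : k ∈ Finset.range (d + 1) := Finset.mem_range.mpr (Nat.lt_succ_of_le hk)
  rw [Finset.prod_div_distrib]
  -- numerator
  have hnum : (∏ j ∈ (Finset.range (d + 1)).erase k, (1 + (j : ℚ))) * (1 + (k : ℚ))
      = ((d+1).factorial : ℚ) := by
    rw [Finset.prod_erase_mul _ _ hmem]
    rw [← Nat.cast_one (R := ℚ)]
    push_cast [← Nat.cast_prod]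
    rw [← Finset.prod_range_add_one_eq_factorial (d + 1)]
    push_cast
    exact Finset.prod_congr rfl fun j _ => by ring
  -- denominator
  have herase : (Finset.range (d + 1)).erase k
      = Finset.range k ∪ Finset.Ico (k + 1) (d + 1) := by
    ext j
    simp only [Finset.mem_erase, Finset.mem_range, Finset.mem_union, Finset.mem_Ico]
    omega
  have hdisj : Disjoint (Finset.range k) (Finset.Ico (k + 1) (d + 1)) := by
    rw [Finset.disjoint_left]
    intro j hj hj'
    simp only [Finset.mem_range] at hj
    simp only [Finset.mem_Ico] at hj'
    omega
  have hden : (∏ j ∈ (Finset.range (d + 1)).erase k, |(k : ℚ) - (j : ℚ)|)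
      = ((k.factorial * (d - k).factorial : ℕ) : ℚ) := by
    rw [herase, Finset.prod_union hdisj]
    have h1 : ∏ j ∈ Finset.range k, |(k : ℚ) - (j : ℚ)| = ((k.factorial : ℕ) : ℚ) := by
      have : ∀ j ∈ Finset.range k, |(k : ℚ) - (j : ℚ)| = ((k - j : ℕ) : ℚ) := by
        intro j hj
        have hjk : j < k := Finset.mem_range.mp hj
        rw [Nat.cast_sub hjk.le, abs_of_nonneg]
        have : (j : ℚ) ≤ (k : ℚ) := by exact_mod_cast hjk.le
        linarith
      rw [Finset.prod_congr rfl this, ← Nat.cast_prod]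
      congr 1
      rw [← Finset.prod_range_add_one_eq_factorial k]
      rw [← Finset.prod_range_reflect (fun j => j + 1) k]
      exact Finset.prod_congr rfl fun j hj => by
        have := Finset.mem_range.mp hj; omega
    have h2 : ∏ j ∈ Finset.Ico (k + 1) (d + 1), |(k : ℚ) - (j : ℚ)|
        = (((d - k).factorial : ℕ) : ℚ) := by
      have : ∀ j ∈ Finset.Ico (k + 1) (d + 1), |(k : ℚ) - (j : ℚ)| = ((j - k : ℕ) : ℚ) := by
        intro j hj
        have hjk : k < j := (Finset.mem_Ico.mp hj).1
        rw [abs_sub_comm, Nat.cast_sub hjk.le, abs_of_nonneg]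
        have : (k : ℚ) ≤ (j : ℚ) := by exact_mod_cast hjk.le
        linarith
      rw [Finset.prod_congr rfl this, ← Nat.cast_prod]
      congr 1
      rw [Finset.prod_Ico_eq_prod_range]
      rw [← Finset.prod_range_add_one_eq_factorial (d - k)]
      have hc : d + 1 - (k + 1) = d - k := by omega
      rw [hc]
      exact Finset.prod_congr rfl fun j _ => by omega
    rw [h1, h2, ← Nat.cast_mul]
  rw [hden]
  have hk1 : (1 : ℚ) + (k : ℚ) ≠ 0 := by positivity
  have hden0 : ((k.factorial * (d - k).factorial : ℕ) : ℚ) ≠ 0 := by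
    simp [Nat.factorial_ne_zero]
  have hfact := Nat.choose_mul_factorial_mul_factorial (Nat.succ_le_succ hk)
  -- (d+1).choose (k+1) * (k+1)! * (d - k)! = (d+1)!  (since d+1-(k+1)=d-k)
  have hsub : d + 1 - (k + 1) = d - k := by omega
  rw [hsub] at hfact
  have hnum' : (∏ j ∈ (Finset.range (d + 1)).erase k, (1 + (j : ℚ)))
      = ((d+1).factorial : ℚ) / (1 + (k : ℚ)) := by
    field_simp [← hnum]
    exact hnum
  rw [hnum']
  rw [div_div, div_eq_iff (by positivity)]
  have hks : ((k+1).factorial : ℚ) = ((k:ℚ)+1) * (k.factorial : ℚ) := by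
    rw [Nat.factorial_succ]; push_cast; ring
  have hthis : ((d+1).choose (k+1) : ℚ) * ((k+1).factorial : ℚ) * ((d-k).factorial : ℚ)
      = ((d+1).factorial : ℚ) := by exact_mod_cast congrArg (Nat.cast (R := ℚ)) hfact
  push_cast
  linear_combination (-1 : ℚ) * hthis
    + (((d+1).choose (k+1) : ℚ) * ((d-k).factorial : ℚ)) * hks

private lemma two_pow_succ_sub_one_le_three_pow : ∀ d : ℕ, 2 ^ (d + 1) - 1 ≤ 3 ^ d
  | 0 => le_refl 1
  | d + 1 => by
    have ih := two_pow_succ_sub_one_le_three_pow d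
    have h1 : 1 ≤ 3 ^ d := Nat.one_le_pow _ _ (by norm_num)
    have h2 : 1 ≤ 2 ^ (d + 1) := Nat.one_le_pow _ _ (by norm_num)
    rw [pow_succ, pow_succ]
    omega

private lemma sum_choose_le (d : ℕ) :
    (∑ k ∈ Finset.range (d + 1), ((d + 1).choose (k + 1) : ℚ)) ≤ 3 ^ d := by
  have h : ∑ k ∈ Finset.range (d + 1), (d + 1).choose (k + 1) = 2 ^ (d + 1) - 1 := by
    have h2 := Nat.sum_range_choose (d + 1)
    have h3 := Finset.sum_range_succ' (fun m => (d + 1).choose m) (d + 1)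
    simp only [Nat.choose_zero_right] at h3
    omega
  rw [← Nat.cast_sum, h]
  have := two_pow_succ_sub_one_le_three_pow d
  calc ((2 ^ (d + 1) - 1 : ℕ) : ℚ) ≤ ((3 ^ d : ℕ) : ℚ) := by exact_mod_cast this
    _ = 3 ^ d := by push_cast; ring

private lemma univ_coeff_bound (d : ℕ) (p : Polynomial ℤ) (hdeg : p.natDegree ≤ d)
    (M : ℤ) (hM : ∀ k ∈ Finset.range (d + 1), |p.eval (k : ℤ)| ≤ M) (i : ℕ) :
    |p.coeff i| ≤ 3 ^ d * M := by
  have hM0 : 0 ≤ M := le_trans (abs_nonneg _) (hM 0 (Finset.mem_range.mpr (Nat.succ_pos d)))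
  set P : Polynomial ℚ := p.map (Int.castRingHom ℚ) with hPdef
  have hdegP : P.degree < (Finset.range (d + 1)).card := by
    rw [Finset.card_range]
    have h1 : P.degree ≤ p.degree := Polynomial.degree_map_le
    have h2 : p.degree ≤ (d : ℕ) := le_trans Polynomial.degree_le_natDegree (by
      exact_mod_cast hdeg)
    exact lt_of_le_of_lt (le_trans h1 h2) (by exact_mod_cast Nat.lt_succ_self d)
  have hinj : Set.InjOn (Nat.cast : ℕ → ℚ) (Finset.range (d + 1)) :=
    fun a _ b _ h => Nat.cast_injective h
  have hP := Lagrange.eq_interpolate hinj hdegP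
  have hcoeff : P.coeff i = ∑ k ∈ Finset.range (d + 1),
      P.eval ((k : ℕ) : ℚ) * (Lagrange.basis (Finset.range (d + 1)) (Nat.cast : ℕ → ℚ) k).coeff i := by
    conv_lhs => rw [hP]
    rw [Lagrange.interpolate_apply, Polynomial.finset_sum_coeff]
    exact Finset.sum_congr rfl fun k _ => by rw [Polynomial.coeff_C_mul]
  have heval : ∀ k : ℕ, P.eval ((k : ℕ) : ℚ) = ((p.eval (k : ℤ) : ℤ) : ℚ) := by
    intro k
    rw [hPdef, Polynomial.eval_map, Polynomial.eval₂_at_natCast]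
    simp
  have hbasis : ∀ k ∈ Finset.range (d + 1),
      |(Lagrange.basis (Finset.range (d + 1)) (Nat.cast : ℕ → ℚ) k).coeff i|
        ≤ ((d + 1).choose (k + 1) : ℚ) := by
    intro k hk
    have hkd : k ≤ d := Nat.lt_succ_iff.mp (Finset.mem_range.mp hk)
    have hx : ∀ j ∈ (Finset.range (d + 1)).erase k, (k : ℚ) ≠ (j : ℚ) := by
      intro j hj
      have : j ≠ k := (Finset.mem_erase.mp hj).1
      exact fun h => this (Nat.cast_injective h.symm)
    have hb := coeff_prod_basisDivisor (k : ℚ) ((Finset.range (d + 1)).erase k) hx i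
    rw [← prod_bound_eq_choose d k hkd]
    exact hb
  have hbound : |P.coeff i| ≤ ∑ k ∈ Finset.range (d + 1), (M : ℚ) * ((d + 1).choose (k + 1) : ℚ) := by
    rw [hcoeff]
    refine le_trans (Finset.abs_sum_le_sum_abs _ _) (Finset.sum_le_sum fun k hk => ?_)
    rw [abs_mul, heval k]
    have h1 : |((p.eval (k : ℤ) : ℤ) : ℚ)| ≤ (M : ℚ) := by
      rw [← Int.cast_abs]
      exact_mod_cast hM k hk
    exact mul_le_mul h1 (hbasis k hk) (abs_nonneg _) (by exact_mod_cast hM0)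
  have hfinal : |P.coeff i| ≤ (3 : ℚ) ^ d * (M : ℚ) := by
    refine le_trans hbound ?_
    rw [← Finset.mul_sum, mul_comm]
    exact mul_le_mul_of_nonneg_right (sum_choose_le d) (by exact_mod_cast hM0)
  have hPc : P.coeff i = ((p.coeff i : ℤ) : ℚ) := by
    rw [hPdef, Polynomial.coeff_map]; simp
  rw [hPc, ← Int.cast_abs] at hfinal
  exact_mod_cast hfinal

open MvPolynomial in
private lemma mainAux (n : ℕ) : ∀ (d : ℕ) (p : MvPolynomial (Fin n) ℤ),
    (∀ m ∈ p.support, ∀ i, m i ≤ d) → ∀ m ∈ p.support,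
    ∃ a : Fin n → ℤ, (∀ i, 0 ≤ a i ∧ a i ≤ (d : ℤ)) ∧
      |MvPolynomial.coeff m p| ≤ 3 ^ (n * d) * |MvPolynomial.eval a p| := by
  induction n with
  | zero =>
    intro d p _ m hm
    refine ⟨fun i => i.elim0, fun i => i.elim0, ?_⟩
    obtain ⟨c, rfl⟩ := MvPolynomial.C_surjective (Fin 0) p
    have hm0 : m = 0 := Finsupp.ext fun i => i.elim0
    subst hm0
    rw [MvPolynomial.eval_C, MvPolynomial.coeff_C]
    simp
  | succ n ih =>
    intro d p hdeg m hm
    set q := MvPolynomial.finSuccEquiv ℤ n p with hq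
    set j := m 0 with hj
    set m' := Finsupp.tail m with hm'def
    have hcoeff : MvPolynomial.coeff m' (q.coeff j) = MvPolynomial.coeff m p := by
      rw [hq, MvPolynomial.finSuccEquiv_coeff_coeff, hm'def, hj, Finsupp.cons_tail]
    have hm' : m' ∈ (q.coeff j).support := by
      rw [MvPolynomial.mem_support_iff, hcoeff]
      exact MvPolynomial.mem_support_iff.mp hm
    have hdeg' : ∀ μ ∈ (q.coeff j).support, ∀ i, μ i ≤ d := by
      intro μ hμ i
      have h1 : MvPolynomial.coeff (Finsupp.cons j μ) p ≠ 0 := by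
        rw [← MvPolynomial.finSuccEquiv_coeff_coeff]
        exact MvPolynomial.mem_support_iff.mp hμ
      have h2 := hdeg _ (MvPolynomial.mem_support_iff.mpr h1) i.succ
      simpa [Finsupp.cons_succ] using h2
    obtain ⟨b, hb, hineq⟩ := ih d (q.coeff j) hdeg' m' hm'
    set r : Polynomial ℤ := q.map (MvPolynomial.eval b) with hr
    have hrdeg : r.natDegree ≤ d := by
      refine le_trans Polynomial.natDegree_map_le ?_
      rw [hq, MvPolynomial.natDegree_finSuccEquiv]
      rw [MvPolynomial.degreeOf_le_iff]
      exact fun m hm => hdeg m hm 0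
    obtain ⟨k₀, hk₀mem, hk₀⟩ := Finset.exists_mem_eq_sup' (s := Finset.range (d + 1))
      ⟨0, Finset.mem_range.mpr (Nat.succ_pos d)⟩ (fun k : ℕ => |r.eval (k : ℤ)|)
    have hM : ∀ k ∈ Finset.range (d + 1), |r.eval (k : ℤ)| ≤ |r.eval (k₀ : ℤ)| := by
      intro k hk
      rw [← hk₀]
      exact Finset.le_sup' (f := fun k : ℕ => |r.eval (k : ℤ)|) hk
    have hcb := univ_coeff_bound d r hrdeg _ hM j
    have hrc : r.coeff j = MvPolynomial.eval b (q.coeff j) := by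
      rw [hr, Polynomial.coeff_map]
    refine ⟨Fin.cons (k₀ : ℤ) b, ?_, ?_⟩
    · intro i
      refine Fin.cases ?_ ?_ i
      · simp only [Fin.cons_zero]
        constructor
        · exact Int.ofNat_nonneg k₀
        · exact_mod_cast Nat.lt_succ_iff.mp (Finset.mem_range.mp hk₀mem)
      · intro i'
        simp only [Fin.cons_succ]
        exact hb i'
    · have heval : MvPolynomial.eval (Fin.cons (k₀ : ℤ) b : Fin (n + 1) → ℤ) p
          = r.eval (k₀ : ℤ) := by
        rw [hr, hq]
        exact MvPolynomial.eval_eq_eval_mv_eval' b (k₀ : ℤ) p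
      rw [heval, ← hcoeff]
      calc |MvPolynomial.coeff m' (q.coeff j)|
          ≤ 3 ^ (n * d) * |MvPolynomial.eval b (q.coeff j)| := hineq
        _ = 3 ^ (n * d) * |r.coeff j| := by rw [hrc]
        _ ≤ 3 ^ (n * d) * (3 ^ d * |r.eval (k₀ : ℤ)|) := by
            exact mul_le_mul_of_nonneg_left hcb (by positivity)
        _ = 3 ^ ((n + 1) * d) * |r.eval (k₀ : ℤ)| := by
            rw [← mul_assoc, ← pow_add]
            ring_nf


open MvPolynomial

/-- **A large value of a weighted homogeneous polynomial at a small integer point**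
(Lemma 3.6). Let `w` be coprime positive weights with `w_n = 1` and `f ∈ ℤ[X_0,…,X_n]`
weighted homogeneous of degree `d` with weights `w`. Then there are
`a_0,…,a_{n-1} ∈ {0,…,d}` with `|f(a_0,…,a_{n-1},1)| ≥ ‖f‖/3^{nd}`. -/
theorem stmt_2 (n d : ℕ) (w : Fin (n + 1) → ℕ) (hwpos : ∀ i, 0 < w i)
    (hwcop : Finset.univ.gcd w = 1) (hwlast : w (Fin.last n) = 1)
    (f : MvPolynomial (Fin (n + 1)) ℤ)
    (hhom : ∀ m ∈ f.support, ∑ i, w i * m i = d) :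
    ∃ a : Fin (n + 1) → ℤ, a (Fin.last n) = 1 ∧
      (∀ i : Fin n, 0 ≤ a i.castSucc ∧ a i.castSucc ≤ (d : ℤ)) ∧
      ((f.support.sup fun m => (f.coeff m).natAbs : ℕ) : ℝ) / 3 ^ (n * d)
        ≤ |((MvPolynomial.eval a f : ℤ) : ℝ)| := by
  classical
  by_cases hf : f = 0
  · refine ⟨Fin.snoc (fun _ => 0) 1, Fin.snoc_last _ _, ?_, ?_⟩
    · intro i
      rw [Fin.snoc_castSucc]
      exact ⟨le_refl 0, Int.ofNat_nonneg d⟩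
    · subst hf
      simp
  set R : (Fin (n + 1) →₀ ℕ) → (Fin n →₀ ℕ) :=
    fun m => Finsupp.equivFunOnFinite.symm (fun j => m (Fin.castSucc j)) with hR
  have hRapp : ∀ (m : Fin (n + 1) →₀ ℕ) (j : Fin n), R m j = m (Fin.castSucc j) :=
    fun m j => rfl
  set φ : Fin (n + 1) → MvPolynomial (Fin n) ℤ := Fin.snoc (fun j => MvPolynomial.X j) 1 with hφ
  set p : MvPolynomial (Fin n) ℤ := MvPolynomial.eval₂ MvPolynomial.C φ f with hpdef
  have hp : p = ∑ m ∈ f.support, MvPolynomial.monomial (R m) (MvPolynomial.coeff m f) := by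
    rw [hpdef, MvPolynomial.eval₂_eq']
    refine Finset.sum_congr rfl fun m _ => ?_
    have hprod : (∏ i, φ i ^ m i) = MvPolynomial.monomial (R m) 1 := by
      rw [Fin.prod_univ_castSucc]
      have h2 : φ (Fin.last n) = 1 := Fin.snoc_last _ _
      rw [h2, one_pow, mul_one]
      have h3 : ∀ j : Fin n, φ (Fin.castSucc j) ^ m (Fin.castSucc j)
          = MvPolynomial.X j ^ (R m) j := by
        intro j
        rw [hRapp]
        congr 1
        exact Fin.snoc_castSucc _ _ j
      rw [Finset.prod_congr rfl fun j _ => h3 j]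
      rw [← MvPolynomial.prod_X_pow_eq_monomial]
      exact (Finset.prod_subset (Finset.subset_univ _) fun x _ hx => by
        rw [Finsupp.notMem_support_iff.mp hx, pow_zero]).symm
    rw [hprod, MvPolynomial.C_mul_monomial, mul_one]
  have hcoeffp : ∀ μ, MvPolynomial.coeff μ p
      = ∑ m ∈ f.support, if R m = μ then MvPolynomial.coeff m f else 0 := by
    intro μ
    rw [hp, MvPolynomial.coeff_sum]
    exact Finset.sum_congr rfl fun m _ => MvPolynomial.coeff_monomial _ _ _
  have hinj : ∀ m ∈ f.support, ∀ m'' ∈ f.support, R m = R m'' → m = m'' := by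
    intro m hm m'' hm'' h
    have h1 : ∀ j : Fin n, m (Fin.castSucc j) = m'' (Fin.castSucc j) := by
      intro j
      rw [← hRapp, ← hRapp, h]
    have hs := hhom m hm
    have hs'' := hhom m'' hm''
    rw [Fin.sum_univ_castSucc, hwlast, one_mul] at hs hs''
    have hsum : (∑ j : Fin n, w (Fin.castSucc j) * m (Fin.castSucc j))
        = ∑ j : Fin n, w (Fin.castSucc j) * m'' (Fin.castSucc j) :=
      Finset.sum_congr rfl fun j _ => by rw [h1 j]
    rw [hsum] at hs
    have hlast : m (Fin.last n) = m'' (Fin.last n) :=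
      Nat.add_left_cancel (hs.trans hs''.symm)
    ext i
    refine Fin.lastCases ?_ ?_ i
    · exact hlast
    · exact h1
  have hexists : ∀ μ, MvPolynomial.coeff μ p ≠ 0 → ∃ m ∈ f.support, R m = μ := by
    intro μ hμ
    by_contra hcon
    push_neg at hcon
    apply hμ
    rw [hcoeffp]
    exact Finset.sum_eq_zero fun m hm => if_neg (hcon m hm)
  have hsupp : ∀ μ ∈ p.support, ∀ i, μ i ≤ d := by
    intro μ hμ i
    obtain ⟨m, hm, rfl⟩ := hexists μ (MvPolynomial.mem_support_iff.mp hμ)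
    rw [hRapp]
    have h1 := hhom m hm
    have h2 : w (Fin.castSucc i) * m (Fin.castSucc i) ≤ d := by
      rw [← h1]
      exact Finset.single_le_sum (f := fun i => w i * m i)
        (fun i _ => Nat.zero_le _) (Finset.mem_univ _)
    exact le_trans (Nat.le_mul_of_pos_left _ (hwpos _)) h2
  obtain ⟨m₀, hm₀, hsup⟩ := Finset.exists_mem_eq_sup f.support
    (MvPolynomial.support_nonempty.mpr hf) fun m => (MvPolynomial.coeff m f).natAbs
  have hcm₀ : MvPolynomial.coeff (R m₀) p = MvPolynomial.coeff m₀ f := by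
    rw [hcoeffp]
    rw [Finset.sum_eq_single_of_mem m₀ hm₀
      fun m hm hne => if_neg fun h => hne (hinj m hm m₀ hm₀ h)]
    exact if_pos rfl
  have hm₀p : R m₀ ∈ p.support := by
    rw [MvPolynomial.mem_support_iff, hcm₀]
    exact MvPolynomial.mem_support_iff.mp hm₀
  obtain ⟨b, hb, hineq⟩ := mainAux n d p hsupp (R m₀) hm₀p
  refine ⟨Fin.snoc b 1, Fin.snoc_last _ _, fun i => by rw [Fin.snoc_castSucc]; exact hb i, ?_⟩
  have heval : MvPolynomial.eval b p = MvPolynomial.eval (Fin.snoc b 1 : Fin (n + 1) → ℤ) f := by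
    rw [hpdef, MvPolynomial.eval_eval₂]
    have hid : (MvPolynomial.eval b).comp (MvPolynomial.C : ℤ →+* MvPolynomial (Fin n) ℤ)
        = RingHom.id ℤ := RingHom.ext fun c => by simp
    have hg : (fun s => MvPolynomial.eval b (φ s)) = (Fin.snoc b 1 : Fin (n + 1) → ℤ) := by
      funext i
      refine Fin.lastCases ?_ ?_ i
      · rw [hφ]
        simp [Fin.snoc_last]
      · intro j
        rw [hφ]
        simp [Fin.snoc_castSucc]
    rw [hid, hg, MvPolynomial.eval₂_id]
  rw [hcm₀, heval] at hineq
  rw [hsup, div_le_iff₀ (by positivity)]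
  have hR' : |((MvPolynomial.coeff m₀ f : ℤ) : ℝ)|
      ≤ 3 ^ (n * d) * |((MvPolynomial.eval (Fin.snoc b 1 : Fin (n + 1) → ℤ) f : ℤ) : ℝ)| := by
    exact_mod_cast hineq
  rw [Nat.cast_natAbs, Int.cast_abs]
  linarith
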